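/- Let Ω ⊂ ℝ³ be open with smooth boundary having k mutually disjoint connected components ∂Ω₀,…,∂Ω_{k−1}. Let φ ∈ C_c^∞(Ω, ℝ³) satisfy curl φ = 0. Then there exist a smooth function u ∈ C^∞(closure Ω) and constants c₀ = 0, c₁,…,c_{k−1} ∈ ℝ such that ∇u = φ on Ω and u = c_i on ∂Ω_i. -/

import Mathlib

open MeasureTheory Topology Filter

noncomputable section

/-- Vectors in ℝ³. -/
abbrev V3 := Fin 3 → ℝ
/-- 3×3 tensors. -/
abbrev M3 := Fin 3 → Fin 3 → ℝ

/-- Levi-Civita symbol on `Fin 3`. -/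
def eps (i j k : Fin 3) : ℝ :=
  (((j : ℕ) : ℝ) - ((i : ℕ) : ℝ)) * (((k : ℕ) : ℝ) - ((i : ℕ) : ℝ)) *
    (((k : ℕ) : ℝ) - ((j : ℕ) : ℝ)) / 2

/-- Partial derivative `∂ᵢ g`. -/
def pd (i : Fin 3) (g : V3 → ℝ) (x : V3) : ℝ := fderiv ℝ g x (Pi.single i 1)

/-- Gradient of a scalar field. -/
def gradF (g : V3 → ℝ) (x : V3) : V3 := fun i => pd i g x

/-- Gradient (Jacobian matrix) of a vector field: `(∇u)_{ij} = ∂_j u_i`. -/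
def gradM (u : V3 → V3) (x : V3) : M3 := fun i j => pd j (fun y => u y i) x

/-- Hessian of a scalar field. -/
def hess (g : V3 → ℝ) (x : V3) : M3 := fun i j => pd i (fun y => pd j g y) x

/-- Curl of a vector field. -/
def curlV (v : V3 → V3) (x : V3) : V3 :=
  fun i => ∑ k, ∑ l, eps i k l * pd k (fun y => v y l) x

/-- Row-wise curl of a tensor field: `(curl A)_{ij} = ε_{jkl} ∂_k A_{il}`. -/
def curlT (A : V3 → M3) (x : V3) : M3 :=
  fun i j => ∑ k, ∑ l, eps j k l * pd k (fun y => A y i l) x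

/-- Divergence of a vector field. -/
def divV (v : V3 → V3) (x : V3) : ℝ := ∑ j, pd j (fun y => v y j) x

/-- Row-wise divergence of a tensor field: `(div A)_i = ∂_j A_{ij}`. -/
def divT (A : V3 → M3) (x : V3) : V3 := fun i => ∑ j, pd j (fun y => A y i j) x

/-- Euclidean dot product. -/
def dotV (a b : V3) : ℝ := ∑ i, a i * b i

/-- Frobenius inner product of tensors. -/
def frob (A B : M3) : ℝ := ∑ i, ∑ j, A i j * B i j

/-- Cross product of vectors. -/
def crossV (a b : V3) : V3 := fun i => ∑ k, ∑ l, eps i k l * a k * b l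

/-- `(x × A)_{ij} = ε_{ikl} x_k A_{lj}`. -/
def xcross (x : V3) (A : M3) : M3 := fun i j => ∑ k, ∑ l, eps i k l * x k * A l j

/-- Transpose. -/
def transp (A : M3) : M3 := fun i j => A j i

/-- Trace. -/
def trace3 (A : M3) : ℝ := ∑ i, A i i

/-- Symmetry of a tensor. -/
def isSym (A : M3) : Prop := ∀ i j, A i j = A j i

/-- Matrix-vector product. -/
def mulVec3 (A : M3) (v : V3) : V3 := fun i => ∑ j, A i j * v j

/-- Identity tensor. -/
def idM : M3 := fun i j => if i = j then (1 : ℝ) else 0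

/-- Euclidean norm. -/
def nrm (v : V3) : ℝ := Real.sqrt (∑ i, v i ^ 2)

/-- Unit normal of the level surface `{f = 0}`: normalized gradient of `f`. -/
def nvec (f : V3 → ℝ) (x : V3) : V3 := (nrm (gradF f x))⁻¹ • gradF f x

/-- Tangential projector `I - n ⊗ n`. -/
def projT (n : V3) : M3 := fun i j => (if i = j then (1 : ℝ) else 0) - n i * n j

/-- Surface (tangential) divergence of a vector field, given a unit-normal field `n`:
`div_S c = (δ_{ij} - n_i n_j) ∂_j c_i`. -/
def divS (n : V3 → V3) (c : V3 → V3) (x : V3) : ℝ :=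
  ∑ i, ∑ j, projT (n x) i j * pd j (fun y => c y i) x

/-- Row-wise surface divergence of a tensor field. -/
def divST (n : V3 → V3) (A : V3 → M3) (x : V3) : V3 :=
  fun i => ∑ j, ∑ k, projT (n x) j k * pd k (fun y => A y i j) x

/-- Twice the mean curvature with respect to `n` (sign convention `κ = -div_S n`). -/
def kappa (n : V3 → V3) (x : V3) : ℝ := -divS n n x

/-- Surface gradient of the normal (shape operator): `(∇_S n)_{ij} = (δ_{jk} - n_j n_k) ∂_k n_i`. -/
def gradSn (n : V3 → V3) (x : V3) : M3 :=
  fun i j => ∑ k, projT (n x) j k * pd k (fun y => n y i) x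

/-- Normal derivative `∂ψ/∂n = ⟨∇ψ, n⟩`. -/
def nder (n : V3 → V3) (g : V3 → ℝ) (x : V3) : ℝ := dotV (gradF g x) (n x)

/-- A scalar test function on `Ω`. -/
def IsTestS (Ω : Set V3) (g : V3 → ℝ) : Prop :=
  ContDiff ℝ (⊤ : ℕ∞) g ∧ HasCompactSupport g ∧ tsupport g ⊆ Ω

/-- A vector-valued test function on `Ω`. -/
def IsTestV (Ω : Set V3) (g : V3 → V3) : Prop :=
  ContDiff ℝ (⊤ : ℕ∞) g ∧ HasCompactSupport g ∧ tsupport g ⊆ Ω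

/-- A tensor-valued test function on `Ω`. -/
def IsTestM (Ω : Set V3) (g : V3 → M3) : Prop :=
  ContDiff ℝ (⊤ : ℕ∞) g ∧ HasCompactSupport g ∧ tsupport g ⊆ Ω

/-! ### Auxiliary machinery -/

/-- The dot product as a continuous bilinear map. -/
def dotLa : V3 →L[ℝ] V3 →L[ℝ] ℝ :=
  ∑ i, (ContinuousLinearMap.smulRightL ℝ V3 ℝ (ContinuousLinearMap.proj i)).comp
    (ContinuousLinearMap.proj i)

@[simp] lemma dotLa_apply (a v : V3) : dotLa a v = dotV a v := by
  simp [dotLa, dotV, ContinuousLinearMap.smulRightL, mul_comm]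

lemma dotLa_norm (a : V3) : ‖dotLa a‖ ≤ 3 * ‖a‖ := by
  refine ContinuousLinearMap.opNorm_le_bound _ (by positivity) fun v => ?_
  rw [dotLa_apply]
  calc ‖dotV a v‖ ≤ ∑ i : Fin 3, ‖a i * v i‖ := norm_sum_le _ _
  _ ≤ ∑ _i : Fin 3, ‖a‖ * ‖v‖ := by
      refine Finset.sum_le_sum fun i _ => ?_
      rw [norm_mul]
      exact mul_le_mul (norm_le_pi_norm a i) (norm_le_pi_norm v i) (norm_nonneg _) (norm_nonneg _)
  _ = 3 * ‖a‖ * ‖v‖ := by simp; ring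

lemma dotV_comm (a b : V3) : dotV a b = dotV b a := by
  simp [dotV, mul_comm]

lemma dotV_smul_right (t : ℝ) (a b : V3) : dotV a (t • b) = t * dotV a b := by
  simp [dotV, Finset.mul_sum]; ring_nf
  exact Finset.sum_congr rfl fun i _ => by ring

lemma fderiv_component {φ : V3 → V3} (hφ : ContDiff ℝ (⊤ : ℕ∞) φ) (l : Fin 3) (y : V3) :
    fderiv ℝ (fun z => φ z l) y = (ContinuousLinearMap.proj l).comp (fderiv ℝ φ y) := by
  have h := ((ContinuousLinearMap.proj l).hasFDerivAt.comp y
    (hφ.differentiable (by simp) y).hasFDerivAt).fderiv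
  simpa [Function.comp_def] using h

/-- Symmetry of the Jacobian of a curl-free compactly supported field. -/
lemma jacobi_symm {Ω : Set V3} {φ : V3 → V3} (hφ : ContDiff ℝ (⊤ : ℕ∞) φ)
    (hsupp : tsupport φ ⊆ Ω)
    (hcurl : ∀ x ∈ Ω, curlV φ x = 0) (y : V3) (i j : Fin 3) :
    fderiv ℝ φ y (Pi.single j 1) i = fderiv ℝ φ y (Pi.single i 1) j := by
  by_cases hy : y ∈ Ω
  · have h0 := hcurl y hy
    have hc : ∀ i' : Fin 3, ∑ k, ∑ l, eps i' k l *
        fderiv ℝ φ y (Pi.single k 1) l = 0 := by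
      intro i'
      have := congrFun h0 i'
      simp only [curlV, Pi.zero_apply] at this
      rw [← this]
      refine Finset.sum_congr rfl fun k _ => Finset.sum_congr rfl fun l _ => ?_
      rw [pd, fderiv_component hφ l y]
      rfl
    have e0 := hc 0
    have e1 := hc 1
    have e2 := hc 2
    norm_num [Fin.sum_univ_three, eps] at e0 e1 e2
    fin_cases i <;> fin_cases j <;> simp_all <;> linarith
  · have hz : φ =ᶠ[𝓝 y] (fun _ => (0 : V3)) := by
      refine Filter.eventually_of_mem
        ((isClosed_tsupport φ).isOpen_compl.mem_nhds fun hmem => hy (hsupp hmem)) ?_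
      exact fun z hz => image_eq_zero_of_notMem_tsupport hz
    have : fderiv ℝ φ y = 0 := by
      rw [hz.fderiv_eq, fderiv_fun_const]
      rfl
    simp [this]


lemma single_combo (v : V3) : ∑ j, v j • (Pi.single j (1:ℝ) : V3) = v := by
  ext i; simp [Pi.single_apply]

lemma dot_symm {Ω : Set V3} {φ : V3 → V3} (hφ : ContDiff ℝ (⊤ : ℕ∞) φ)
    (hsupp : tsupport φ ⊆ Ω)
    (hcurl : ∀ x ∈ Ω, curlV φ x = 0) (y v w : V3) :
    dotV w (fderiv ℝ φ y v) = dotV (fderiv ℝ φ y w) v := by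
  have expand : ∀ a b : V3, dotV b (fderiv ℝ φ y a) =
      ∑ i, ∑ j, b i * (a j * fderiv ℝ φ y (Pi.single j 1) i) := by
    intro a b
    have ha : fderiv ℝ φ y a = ∑ j, a j • fderiv ℝ φ y (Pi.single j 1) := by
      conv_lhs => rw [← single_combo a]
      rw [map_sum]
      exact Finset.sum_congr rfl fun j _ => by rw [(fderiv ℝ φ y).map_smul]
    rw [ha, dotV]
    refine Finset.sum_congr rfl fun i _ => ?_
    rw [Finset.sum_apply, Finset.mul_sum]
    exact Finset.sum_congr rfl fun j _ => by simp [Pi.smul_apply]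
  rw [expand, dotV_comm, expand, Finset.sum_comm]
  refine Finset.sum_congr rfl fun i _ => Finset.sum_congr rfl fun j _ => ?_
  rw [jacobi_symm hφ hsupp hcurl y i j]
  ring

/-- The homotopy-formula potential. -/
def pot (φ : V3 → V3) (x : V3) : ℝ := ∫ t in (0:ℝ)..1, dotV (φ (t • x)) x

lemma key_hasFDerivAt {Ω : Set V3} {φ : V3 → V3} (hφ : ContDiff ℝ (⊤ : ℕ∞) φ)
    (hcs : HasCompactSupport φ) (hsupp : tsupport φ ⊆ Ω)
    (hcurl : ∀ x ∈ Ω, curlV φ x = 0) (x : V3) :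
    HasFDerivAt (pot φ) (dotLa (φ x)) x := by
  have hφdiff : Differentiable ℝ φ := hφ.differentiable (by simp)
  have hφcont : Continuous φ := hφ.continuous
  have hDcont : Continuous (fderiv ℝ φ) := hφ.continuous_fderiv (by simp)
  obtain ⟨C₀, hC₀⟩ := hcs.exists_bound_of_continuous hφcont
  obtain ⟨C₁, hC₁⟩ := (hcs.fderiv (𝕜 := ℝ)).exists_bound_of_continuous hDcont
  set F' : V3 → ℝ → V3 →L[ℝ] ℝ := fun x t =>
    (dotLa x).comp (t • fderiv ℝ φ (t • x)) + dotLa (φ (t • x)) with hF'def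
  -- pointwise differentiability in x
  have hdiff : ∀ (t : ℝ) (x' : V3),
      HasFDerivAt (fun y => dotV (φ (t • y)) y) (F' x' t) x' := by
    intro t x'
    have hsm : HasFDerivAt (fun y : V3 => t • y)
        (t • ContinuousLinearMap.id ℝ V3) x' := (hasFDerivAt_id x').const_smul t
    have hφ' : HasFDerivAt φ (fderiv ℝ φ (t • x')) (t • x') := (hφdiff _).hasFDerivAt
    have hcomp : HasFDerivAt (fun y => φ (t • y))
        ((fderiv ℝ φ (t • x')).comp (t • ContinuousLinearMap.id ℝ V3)) x' := hφ'.comp x' hsm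
    have hc : HasFDerivAt (fun y => dotLa (φ (t • y)))
        (dotLa.comp ((fderiv ℝ φ (t • x')).comp (t • ContinuousLinearMap.id ℝ V3))) x' :=
      dotLa.hasFDerivAt.comp x' hcomp
    have happ := hc.clm_apply (hasFDerivAt_id x')
    simp only [id_eq] at happ
    have : (fun y => dotLa (φ (t • y)) y) = fun y => dotV (φ (t • y)) y := by
      funext y; rw [dotLa_apply]
    rw [this] at happ
    refine happ.congr_fderiv ?_
    refine (ContinuousLinearMap.ext fun v => ?_).symm
    simp [F', dotV, ContinuousLinearMap.smul_apply, _root_.map_smul, mul_comm]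
    ring
  -- continuity in t
  have hFcont : ∀ x' : V3, Continuous fun t : ℝ => dotV (φ (t • x')) x' := by
    intro x'
    have h1 : Continuous fun t : ℝ => φ (t • x') := hφcont.comp (continuous_id.smul continuous_const)
    have h2 : (fun t : ℝ => dotV (φ (t • x')) x') = fun t => dotLa (φ (t • x')) x' := by
      funext t; rw [dotLa_apply]
    rw [h2]
    exact (ContinuousLinearMap.apply ℝ ℝ x').continuous.comp (dotLa.continuous.comp h1)
  have hF'cont : ∀ x' : V3, Continuous fun t : ℝ => F' x' t := by
    intro x'
    have h2 : Continuous fun t : ℝ => fderiv ℝ φ (t • x') := hDcont.comp (continuous_id.smul continuous_const)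
    have h3 : Continuous fun t : ℝ => t • fderiv ℝ φ (t • x') := continuous_id.smul h2
    have h4 : Continuous fun t : ℝ => (dotLa x').comp (t • fderiv ℝ φ (t • x')) :=
      (ContinuousLinearMap.compL ℝ V3 V3 ℝ (dotLa x')).continuous.comp h3
    have h5 : Continuous fun t : ℝ => dotLa (φ (t • x')) :=
      dotLa.continuous.comp (hφcont.comp (continuous_id.smul continuous_const))
    exact h4.add h5
  -- uniform bound on the derivative
  have hbound : ∀ᵐ t : ℝ ∂volume, t ∈ Set.uIoc (0:ℝ) 1 →
      ∀ x' ∈ Metric.ball x 1, ‖F' x' t‖ ≤ 3 * (‖x‖ + 1) * C₁ + 3 * C₀ := by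
    refine Eventually.of_forall fun t ht x' hx' => ?_
    have habs : |t| ≤ 1 := by
      rw [Set.uIoc_of_le zero_le_one] at ht
      rw [abs_le]; constructor <;> [linarith [ht.1]; exact ht.2]
    have hx'n : ‖x'‖ ≤ ‖x‖ + 1 := by
      have h1 : ‖x' - x‖ < 1 := mem_ball_iff_norm.mp hx'
      have h2 : ‖x'‖ ≤ ‖x‖ + ‖x' - x‖ := by
        simpa using norm_add_le x (x' - x)
      linarith
    have b1 : ‖dotLa x'‖ ≤ 3 * (‖x‖ + 1) := (dotLa_norm x').trans (by linarith)
    have b2 : ‖t • fderiv ℝ φ (t • x')‖ ≤ C₁ := by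
      rw [norm_smul, Real.norm_eq_abs]
      have h0 : (0:ℝ) ≤ ‖fderiv ℝ φ (t • x')‖ := norm_nonneg _
      calc |t| * ‖fderiv ℝ φ (t • x')‖ ≤ 1 * C₁ :=
            mul_le_mul habs (hC₁ (t • x')) h0 zero_le_one
        _ = C₁ := one_mul _
    have b3 : ‖dotLa (φ (t • x'))‖ ≤ 3 * C₀ := (dotLa_norm _).trans (by linarith [hC₀ (t • x')])
    calc ‖F' x' t‖ ≤ ‖(dotLa x').comp (t • fderiv ℝ φ (t • x'))‖ + ‖dotLa (φ (t • x'))‖ :=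
          norm_add_le _ _
      _ ≤ ‖dotLa x'‖ * ‖t • fderiv ℝ φ (t • x')‖ + 3 * C₀ :=
          add_le_add (ContinuousLinearMap.opNorm_comp_le _ _) b3
      _ ≤ 3 * (‖x‖ + 1) * C₁ + 3 * C₀ := by
          have hnn : (0:ℝ) ≤ ‖t • fderiv ℝ φ (t • x')‖ := norm_nonneg _
          have := mul_le_mul b1 b2 hnn (by positivity)
          linarith
  -- the dominated differentiation theorem
  have hmain := intervalIntegral.hasFDerivAt_integral_of_dominated_of_fderiv_le
    (𝕜 := ℝ) (μ := volume) (F := fun x' t => dotV (φ (t • x')) x') (F' := F') (x₀ := x)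
    (a := 0) (b := 1) (bound := fun _ => 3 * (‖x‖ + 1) * C₁ + 3 * C₀) (s := Metric.ball x 1) (Metric.ball_mem_nhds x one_pos)
    (Eventually.of_forall fun x' => (hFcont x').aestronglyMeasurable)
    ((hFcont x).intervalIntegrable 0 1)
    ((hF'cont x).aestronglyMeasurable)
    hbound
    (intervalIntegrable_const)
    (Eventually.of_forall fun t _ x' _ => hdiff t x')
  -- identify the derivative with `dotLa (φ x)` via FTC and Jacobian symmetry
  have hint : IntervalIntegrable (F' x) volume 0 1 := (hF'cont x).intervalIntegrable 0 1
  have heq : (∫ t in (0:ℝ)..1, F' x t) = dotLa (φ x) := by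
    refine ContinuousLinearMap.ext fun v => ?_
    rw [ContinuousLinearMap.intervalIntegral_apply hint]
    have hder : ∀ t : ℝ, HasDerivAt (fun s : ℝ => s * dotV (φ (s • x)) v) (F' x t v) t := by
      intro t
      have hpath : HasDerivAt (fun s : ℝ => s • x) x t := by
        simpa using (hasDerivAt_id t).smul_const x
      have hφd : HasDerivAt (fun s : ℝ => φ (s • x)) (fderiv ℝ φ (t • x) x) t :=
        ((hφdiff _).hasFDerivAt).comp_hasDerivAt t hpath
      have hg : HasDerivAt (fun s : ℝ => dotV (φ (s • x)) v) (dotV (fderiv ℝ φ (t • x) x) v) t := by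
        have h := (dotLa.flip v).hasFDerivAt.comp_hasDerivAt t hφd
        simpa [Function.comp_def, ContinuousLinearMap.flip_apply] using h
      have hmul := (hasDerivAt_id t).mul hg
      refine hmul.congr_deriv (Eq.symm ?_)
      have hs := dot_symm hφ hsupp hcurl (t • x) v x
      simp only [F', ContinuousLinearMap.add_apply, ContinuousLinearMap.comp_apply,
        ContinuousLinearMap.smul_apply, dotLa_apply, id_eq, one_mul]
      rw [dotV_smul_right, hs]
      ring
    have hcv : Continuous fun t : ℝ => F' x t v :=
      (ContinuousLinearMap.apply ℝ ℝ v).continuous.comp (hF'cont x)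
    have hFTC := intervalIntegral.integral_eq_sub_of_hasDerivAt
      (f := fun s : ℝ => s * dotV (φ (s • x)) v) (fun t _ => hder t)
      (hcv.intervalIntegrable 0 1)
    rw [hFTC]
    simp
  rw [heq] at hmain
  exact hmain

lemma constant_on_preconnected {u : V3 → ℝ} {U : Set V3} (hU : IsOpen U)
    (hud : Differentiable ℝ u) (hfz : ∀ y ∈ U, fderiv ℝ u y = 0)
    {S : Set V3} (hS : IsPreconnected S) (hSU : S ⊆ U) {x₀ : V3} (hx₀ : x₀ ∈ S) :
    ∀ x ∈ S, u x = u x₀ := by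
  have hloc : ∀ y ∈ U, ∀ r : ℝ, 0 < r → Metric.ball y r ⊆ U →
      ∀ z ∈ Metric.ball y r, u z = u y := by
    intro y hy r hr hball z hz
    refine (convex_ball y r).is_const_of_fderivWithin_eq_zero hud.differentiableOn
      (fun w hw => ?_) hz (Metric.mem_ball_self hr)
    rw [fderivWithin_of_isOpen Metric.isOpen_ball hw]
    exact hfz w (hball hw)
  set A := {y ∈ U | u y = u x₀} with hAdef
  set B := {y ∈ U | u y ≠ u x₀} with hBdef
  have hA : IsOpen A := by
    rw [Metric.isOpen_iff]
    rintro y ⟨hyU, hyv⟩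
    obtain ⟨r, hr, hball⟩ := Metric.isOpen_iff.mp hU y hyU
    exact ⟨r, hr, fun z hz => ⟨hball hz, by rw [hloc y hyU r hr hball z hz, hyv]⟩⟩
  have hB : IsOpen B := by
    rw [Metric.isOpen_iff]
    rintro y ⟨hyU, hyv⟩
    obtain ⟨r, hr, hball⟩ := Metric.isOpen_iff.mp hU y hyU
    exact ⟨r, hr, fun z hz => ⟨hball hz, by rw [hloc y hyU r hr hball z hz]; exact hyv⟩⟩
  have hdisj : Disjoint A B := by
    rw [Set.disjoint_left]
    rintro y ⟨_, hy1⟩ ⟨_, hy2⟩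
    exact hy2 hy1
  have hsub : S ⊆ A ∪ B := fun y hy => by
    by_cases h : u y = u x₀
    · exact Or.inl ⟨hSU hy, h⟩
    · exact Or.inr ⟨hSU hy, h⟩
  have hfin := hS.subset_left_of_subset_union hA hB hdisj hsub ⟨x₀, hx₀, hSU hx₀, rfl⟩
  exact fun x hx => (hfin hx).2


/-- A compactly supported smooth curl-free vector field on a bounded connected
open set `Ω`, whose boundary has `k` mutually disjoint connected components
`Γ 0, …, Γ (k-1)`, admits a smooth potential `u` with `∇u = φ` on `Ω` which is
constant on each boundary component, with the constant `c 0 = 0` on `Γ 0`. -/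
theorem potential_constant_on_boundary_components
    (Ω : Set V3) (hΩ : IsOpen Ω) (hconn : IsConnected Ω)
    (hbdd : Bornology.IsBounded Ω)
    (k : ℕ) (hk : 0 < k)
    (Γ : Fin k → Set V3)
    (hΓdisj : Pairwise (Function.onFun Disjoint Γ))
    (hΓconn : ∀ i, IsConnected (Γ i))
    (hΓcover : frontier Ω = ⋃ i, Γ i)
    (φ : V3 → V3) (hφ : IsTestV Ω φ)
    (hcurl : ∀ x ∈ Ω, curlV φ x = 0) :
    ∃ (u : V3 → ℝ) (c : Fin k → ℝ),
      ContDiff ℝ (⊤ : ℕ∞) u ∧ c ⟨0, hk⟩ = 0 ∧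
        (∀ x ∈ Ω, gradF u x = φ x) ∧
        ∀ i, ∀ x ∈ Γ i, u x = c i := by
  obtain ⟨hφs, hφcs, hφsupp⟩ := hφ
  have hfd : ∀ x, HasFDerivAt (pot φ) (dotLa (φ x)) x :=
    fun x => key_hasFDerivAt hφs hφcs hφsupp hcurl x
  have hdiffable : Differentiable ℝ (pot φ) := fun x => (hfd x).differentiableAt
  have hsmooth : ContDiff ℝ (⊤ : ℕ∞) (pot φ) := by
    rw [contDiff_infty_iff_fderiv]
    refine ⟨hdiffable, ?_⟩
    have h : fderiv ℝ (pot φ) = fun x => dotLa (φ x) := funext fun x => (hfd x).fderiv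
    rw [h]
    exact dotLa.contDiff.comp hφs
  have hUopen : IsOpen (tsupport φ)ᶜ := (isClosed_tsupport φ).isOpen_compl
  have hfz : ∀ y ∈ (tsupport φ)ᶜ, fderiv ℝ (pot φ) y = 0 := by
    intro y hy
    rw [(hfd y).fderiv, image_eq_zero_of_notMem_tsupport hy, map_zero]
  have hΓU : ∀ i, Γ i ⊆ (tsupport φ)ᶜ := by
    intro i x hx
    have hxf : x ∈ frontier Ω := hΓcover ▸ Set.mem_iUnion.mpr ⟨i, hx⟩
    have hxΩ : x ∉ Ω := by
      rw [hΩ.frontier_eq] at hxf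
      exact hxf.2
    exact fun hmem => hxΩ (hφsupp hmem)
  have hpt : ∀ i, (Γ i).Nonempty := fun i => (hΓconn i).nonempty
  set p : Fin k → V3 := fun i => (hpt i).choose with hpdef
  have hp : ∀ i, p i ∈ Γ i := fun i => (hpt i).choose_spec
  have hconst : ∀ i, ∀ x ∈ Γ i, pot φ x = pot φ (p i) := fun i =>
    constant_on_preconnected hUopen hdiffable hfz (hΓconn i).isPreconnected (hΓU i) (hp i)
  refine ⟨fun x => pot φ x - pot φ (p ⟨0, hk⟩),
    fun i => pot φ (p i) - pot φ (p ⟨0, hk⟩), hsmooth.sub contDiff_const, sub_self _, ?_, ?_⟩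
  · intro x _
    funext i
    show pd i _ x = φ x i
    rw [pd, fderiv_sub_const, (hfd x).fderiv, dotLa_apply]
    simp [dotV, Pi.single_apply]
  · intro i x hx
    simp only [sub_left_inj]
    exact hconst i x hx
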